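/- For m ≥ 4 even and gcd(i,m)=1, the function F'(x) = x^{2^i+1} + (x^{2^i}+x+1)·tr(x^{2^i+1}) on F_{2^m} is APN (for every a≠0 and b, the equation F'(x+a)+F'(x)=b has at most 2 solutions), and F' is EA-inequivalent to every power function. -/

import Mathlib

set_option maxHeartbeats 1000000

/-- The absolute trace of `𝔽_{2^m}` over `𝔽₂`. -/
noncomputable def tr (m : ℕ) (x : GaloisField 2 m) : ZMod 2 :=
  Algebra.trace (ZMod 2) (GaloisField 2 m) x

/-- The function `F'(x) = x^{2^i+1} + (x^{2^i} + x + 1)·tr(x^{2^i+1})`. -/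
noncomputable def Fapn (m i : ℕ) (x : GaloisField 2 m) : GaloisField 2 m :=
  x ^ (2 ^ i + 1) + (x ^ (2 ^ i) + x + 1) *
    algebraMap (ZMod 2) (GaloisField 2 m) (tr m (x ^ (2 ^ i + 1)))

section
variable (m : ℕ)

lemma h2c : (2 : GaloisField 2 m) = 0 := CharTwo.two_eq_zero
lemma kpow_add (x : GaloisField 2 m) (a b : ℕ) : x ^ 2^(a+b) = (x ^ 2^a)^(2^b) := by
  rw [pow_add, pow_mul]
lemma kpow_card (hm : m ≠ 0) (x : GaloisField 2 m) : x ^ (2^m) = x := by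
  cases nonempty_fintype (GaloisField 2 m)
  have hc : Fintype.card (GaloisField 2 m) = 2 ^ m := by
    rw [← Nat.card_eq_fintype_card, GaloisField.card 2 m hm]
  rw [← hc, FiniteField.pow_card]
lemma kpow_mul_card (hm : m ≠ 0) (x : GaloisField 2 m) (q : ℕ) : x ^ (2^(m*q)) = x := by
  induction q with
  | zero => simp
  | succ n ih => rw [Nat.mul_succ, kpow_add, ih, kpow_card m hm]
lemma kpow_mod (hm : m ≠ 0) (x : GaloisField 2 m) (k : ℕ) : x ^ (2^k) = x ^ (2^(k % m)) := by
  conv_lhs => rw [← Nat.div_add_mod k m]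
  rw [Nat.add_comm, kpow_add, kpow_mul_card m hm]
lemma frob_add (j : ℕ) (x y : GaloisField 2 m) :
    (x + y) ^ (2^j) = x ^ (2^j) + y ^ (2^j) := add_pow_char_pow x y 2 j

lemma kpow_mul_j (j : ℕ) (x : GaloisField 2 m) (hx : x ^ (2^j) = x) (n : ℕ) :
    x ^ (2^(j*n)) = x := by
  induction n with
  | zero => simp
  | succ n ih => rw [Nat.mul_succ, kpow_add, ih, hx]

/-- If `x^{2^j} = x` and `gcd j m = 1` then `x² = x`. -/
lemma sq_of_frob_fixed (hm : 2 ≤ m) {j : ℕ} (hg : Nat.gcd j m = 1)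
    (x : GaloisField 2 m) (hx : x ^ (2^j) = x) : x ^ 2 = x := by
  obtain ⟨k, -, hk⟩ := Nat.exists_mul_mod_eq_one_of_coprime hg (by omega)
  calc x ^ 2 = x ^ (2^((j*k) % m)) := by rw [hk]; norm_num
    _ = x ^ (2^(j*k)) := (kpow_mod m (by omega) x _).symm
    _ = x := kpow_mul_j m j x hx k

/-- If `x^{2^{2j}} = x`, `gcd j m = 1`, `m ≥ 3` even... then `x⁴ = x`. -/
lemma four_of_frob2_fixed (hm : 4 ≤ m) {j : ℕ} (hg : Nat.gcd j m = 1)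
    (x : GaloisField 2 m) (hx : x ^ (2^(2*j)) = x) : x ^ 4 = x := by
  obtain ⟨k, -, hk⟩ := Nat.exists_mul_mod_eq_one_of_coprime hg (by omega)
  have h1 : j * k = m * (j*k/m) + 1 := by
    conv_lhs => rw [← Nat.div_add_mod (j*k) m]
    rw [hk]
  have h2 : (2*(j*k)) % m = 2 := by
    rw [h1, show 2*(m*(j*k/m)+1) = m*(2*(j*k/m)) + 2 by ring, Nat.mul_add_mod]
    exact Nat.mod_eq_of_lt (by omega)
  calc x ^ 4 = x ^ (2^((2*(j*k)) % m)) := by rw [h2]; norm_num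
    _ = x ^ (2^(2*(j*k))) := (kpow_mod m (by omega) x _).symm
    _ = x ^ (2^((2*j)*k)) := by rw [Nat.mul_assoc]
    _ = x := kpow_mul_j m (2*j) x hx k

lemma tr_add (x y : GaloisField 2 m) : tr m (x + y) = tr m x + tr m y :=
  map_add (Algebra.trace (ZMod 2) (GaloisField 2 m)) x y
lemma tr_zero : tr m 0 = 0 := map_zero (Algebra.trace (ZMod 2) (GaloisField 2 m))
lemma tr_tau (c : ZMod 2) (x : GaloisField 2 m) :
    tr m (algebraMap (ZMod 2) (GaloisField 2 m) c * x) = c * tr m x := by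
  rw [← Algebra.smul_def]
  exact (Algebra.trace (ZMod 2) (GaloisField 2 m)).map_smul c x
lemma tr_one (hm : m ≠ 0) (hme : Even m) : tr m 1 = 0 := by
  unfold tr
  rw [show (1 : GaloisField 2 m) = algebraMap (ZMod 2) (GaloisField 2 m) 1 from (map_one _).symm,
    Algebra.trace_algebraMap, GaloisField.finrank 2 hm]
  rw [nsmul_eq_mul, mul_one]
  rw [ZMod.natCast_eq_zero_iff]
  exact hme.two_dvd

lemma tr_sq (x : GaloisField 2 m) : tr m (x ^ 2) = tr m x := by
  let φ : GaloisField 2 m →ₐ[ZMod 2] GaloisField 2 m :=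
    { toRingHom := frobenius (GaloisField 2 m) 2
      commutes' := fun c => by
        have : ∀ c : ZMod 2, c ^ 2 = c := by decide
        simp [frobenius_def, ← map_pow, this] }
  have hbij : Function.Bijective φ :=
    (Finite.injective_iff_bijective).mp (φ.toRingHom.injective)
  let e : GaloisField 2 m ≃ₐ[ZMod 2] GaloisField 2 m := AlgEquiv.ofBijective φ hbij
  have := Algebra.trace_eq_of_algEquiv e x
  simpa [tr, e, φ, AlgEquiv.ofBijective, frobenius_def] using this

lemma tr_frob (hm : m ≠ 0) (x : GaloisField 2 m) (k : ℕ) : tr m (x ^ (2^k)) = tr m x := by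
  induction k with
  | zero => simp
  | succ n ih => rw [kpow_add m x n 1, pow_one, tr_sq, ih]

lemma tr_exists_one (hm : m ≠ 0) {c : GaloisField 2 m} (hc : c ≠ 0) :
    ∃ v, tr m (c * v) = 1 := by
  obtain ⟨z, hz⟩ := Algebra.trace_surjective (ZMod 2) (GaloisField 2 m) 1
  exact ⟨c⁻¹ * z, by rw [← mul_assoc, mul_inv_cancel₀ hc, one_mul]; exact hz⟩

end

section
variable (m j : ℕ)

/-- `t(x) = tr(x^{2^j+1})`. -/
noncomputable def tt (x : GaloisField 2 m) : ZMod 2 := tr m (x ^ (2^j) * x)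
/-- `ℓ(x) = x^{2^j} + x + 1`. -/
noncomputable def ll (x : GaloisField 2 m) : GaloisField 2 m := x ^ (2^j) + x + 1
/-- `τ : ZMod 2 → K`. -/
noncomputable def τ (c : ZMod 2) : GaloisField 2 m := algebraMap (ZMod 2) (GaloisField 2 m) c
/-- the involution `F₁(x) = x + τ(t(x))`. -/
noncomputable def FF (x : GaloisField 2 m) : GaloisField 2 m := x + τ m (tt m j x)

lemma tau_cases (c : ZMod 2) : τ m c = 0 ∨ τ m c = 1 := by
  rcases (by decide : ∀ c : ZMod 2, c = 0 ∨ c = 1) c with h | h <;> subst h <;> [left; right] <;> simp [τ]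

lemma tau_add (c c' : ZMod 2) : τ m (c + c') = τ m c + τ m c' := map_add _ c c'
lemma tau_one : τ m 1 = 1 := map_one _
lemma tau_zero : τ m 0 = 0 := map_zero _

/-- `Fapn` rewritten with exponent `j`. -/
noncomputable def FapnJ (x : GaloisField 2 m) : GaloisField 2 m :=
  x ^ (2^j) * x + ll m j x * τ m (tt m j x)

lemma Fapn_eq (hm : m ≠ 0) (i : ℕ) (hj : j = i % m) (x : GaloisField 2 m) :
    Fapn m i x = FapnJ m j x := by
  rw [FapnJ]
  have hp : x ^ (2^i + 1) = x ^ (2^j) * x := by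
    rw [pow_succ, kpow_mod m hm x i, hj]
  rw [Fapn, hp, ll, tt, τ, kpow_mod m hm x i, hj]

lemma tt_add (hm : m ≠ 0) (hjm : j ≤ m) (x y : GaloisField 2 m) :
    tt m j (x + y) = tt m j x + tt m j y + tr m ((x ^ (2^j) + x ^ (2^(m-j))) * y) := by
  have hcross : tr m (x * y ^ (2^j)) = tr m (x ^ (2^(m-j)) * y) := by
    rw [← tr_frob m hm (x * y ^ (2^j)) (m - j), mul_pow, ← kpow_add,
      Nat.add_sub_cancel' hjm, kpow_card m hm]
  have hexp : (x + y) ^ (2^j) * (x + y)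
      = x ^ (2^j) * x + y ^ (2^j) * y + (x * y ^ (2^j) + x ^ (2^j) * y) := by
    rw [frob_add]; ring
  rw [tt, hexp, tr_add, tr_add, tr_add m (x * y ^ (2^j)), hcross, ← tt, ← tt, add_mul, tr_add]
  ring

lemma tt_add_one (hm : m ≠ 0) (hme : Even m) (hjm : j ≤ m) (x : GaloisField 2 m) :
    tt m j (x + 1) = tt m j x := by
  rw [tt_add m j hm hjm x 1]
  have h1 : tt m j 1 = tr m 1 := by rw [tt, one_pow, mul_one]
  rw [h1, tr_one m hm hme, mul_one, tr_add, tr_frob m hm x j, tr_frob m hm x (m-j),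
    CharTwo.add_self_eq_zero (tr m x), add_zero, add_zero]

lemma FF_pow (x : GaloisField 2 m) :
    (FF m j x) ^ (2^j) * (FF m j x) = FapnJ m j x := by
  rcases tau_cases m (tt m j x) with h | h
  · rw [FapnJ, FF, h, add_zero, mul_zero, add_zero]
  · rw [FapnJ, FF, h, frob_add, one_pow, ll]; ring

lemma tr_FapnJ (hm : m ≠ 0) (hme : Even m) (x : GaloisField 2 m) :
    tr m (FapnJ m j x) = tt m j x := by
  have hll : tr m (ll m j x) = 0 := by
    rw [ll, tr_add, tr_add, tr_frob m hm x j, tr_one m hm hme, add_zero,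
      CharTwo.add_self_eq_zero]
  rw [FapnJ, tr_add, ← tt, mul_comm]
  simp only [τ]
  rw [tr_tau, hll, mul_zero, add_zero]

lemma FF_invol (hm : m ≠ 0) (hme : Even m) (hjm : j ≤ m) (x : GaloisField 2 m) :
    FF m j (FF m j x) = x := by
  rcases (by decide : ∀ c : ZMod 2, c = 0 ∨ c = 1) (tt m j x) with h | h
  · rw [FF, FF, h, tau_zero, add_zero, h, tau_zero, add_zero]
  · have h1 : FF m j x = x + 1 := by rw [FF, h, tau_one]
    rw [h1, FF, tt_add_one m j hm hme hjm, h, tau_one]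
    linear_combination h2c m

lemma gold_expand (a' X : GaloisField 2 m) :
    (X + a')^(2^j) * (X + a') + X^(2^j) * X
      = a' * X^(2^j) + a'^(2^j) * X + a'^(2^j) * a' := by
  rw [frob_add]; linear_combination (X^(2^j) * X) * h2c m

lemma sol_to_gold (hm : m ≠ 0) (hme : Even m) (hjm : j ≤ m) (a b x : GaloisField 2 m)
    (hx : FapnJ m j (x + a) + FapnJ m j x = b) :
    (a + τ m (tr m b)) * (FF m j x)^(2^j) + (a + τ m (tr m b))^(2^j) * (FF m j x)
      + (a + τ m (tr m b))^(2^j) * (a + τ m (tr m b)) = b := by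
  set a' := a + τ m (tr m b) with ha'
  set P := FF m j (x + a) with hP
  set Q := FF m j x with hQ
  have htt : tt m j (x + a) + tt m j x = tr m b := by
    rw [← tr_FapnJ m j hm hme (x+a), ← tr_FapnJ m j hm hme x, ← tr_add, hx]
  have h5 : P + Q = a' := by
    rw [ha', ← htt, hP, hQ, FF, FF, tau_add]
    linear_combination x * h2c m
  have hPQ : P = Q + a' := by linear_combination h5 - Q * h2c m
  have hb : (Q + a')^(2^j) * (Q + a') + Q^(2^j) * Q = b := by
    rw [← hPQ, hP, hQ, FF_pow, FF_pow]; exact hx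
  linear_combination hb - gold_expand m j a' Q

lemma zero_or_one_of_frob_fixed (hm2 : 2 ≤ m) (hg : Nat.gcd j m = 1)
    (W : GaloisField 2 m) (hfix : W^(2^j) = W) : W = 0 ∨ W = 1 := by
  have hsq := sq_of_frob_fixed m hm2 hg W hfix
  have h0 : W * (W - 1) = 0 := by linear_combination hsq
  rcases mul_eq_zero.mp h0 with h | h
  · exact Or.inl h
  · exact Or.inr (sub_eq_zero.mp h)

lemma gold_unique (hm2 : 2 ≤ m) (hg : Nat.gcd j m = 1) {a' b X Y : GaloisField 2 m}
    (ha' : a' ≠ 0)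
    (hX : a' * X^(2^j) + a'^(2^j) * X + a'^(2^j) * a' = b)
    (hY : a' * Y^(2^j) + a'^(2^j) * Y + a'^(2^j) * a' = b) :
    Y = X ∨ Y = X + a' := by
  have hZ : a' * (X+Y)^(2^j) + a'^(2^j) * (X+Y) = 0 := by
    rw [frob_add]; linear_combination hX - hY + (a' * Y^(2^j) + a'^(2^j) * Y) * h2c m
  set W := (X+Y) * a'⁻¹ with hW
  have hXY : X + Y = W * a' := by rw [hW, mul_assoc, inv_mul_cancel₀ ha', mul_one]
  have h1 : (a'^(2^j) * a') * (W^(2^j) + W) = 0 := by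
    rw [hXY, mul_pow] at hZ; linear_combination hZ
  have h2 : W^(2^j) + W = 0 := by
    rcases mul_eq_zero.mp h1 with h | h
    · exact absurd h (mul_ne_zero (pow_ne_zero _ ha') ha')
    · exact h
  have hWfix : W^(2^j) = W := by linear_combination h2 - W * h2c m
  rcases zero_or_one_of_frob_fixed m j hm2 hg W hWfix with h | h
  · left
    have h0 : X + Y = 0 := by rw [hXY, h, zero_mul]
    linear_combination h0 - X * h2c m
  · right
    have h0 : X + Y = a' := by rw [hXY, h, one_mul]
    linear_combination h0 - X * h2c m

theorem part1 (hm4 : 4 ≤ m) (hme : Even m) (i : ℕ) (hi : Nat.gcd i m = 1)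
    (a b : GaloisField 2 m) (ha : a ≠ 0) :
    Nat.card {x : GaloisField 2 m // Fapn m i (x + a) + Fapn m i x = b} ≤ 2 := by
  classical
  have hm : m ≠ 0 := by omega
  set j := i % m with hjdef
  have hjm : j ≤ m := le_of_lt (Nat.mod_lt _ (by omega))
  have hg : Nat.gcd j m = 1 := by
    rw [hjdef, ← Nat.gcd_rec, Nat.gcd_comm]; exact hi
  have hcond : ∀ x, (Fapn m i (x+a) + Fapn m i x = b) ↔ (FapnJ m j (x+a) + FapnJ m j x = b) := by
    intro x; rw [Fapn_eq m j hm i hjdef, Fapn_eq m j hm i hjdef]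
  by_cases hex : ∃ x, Fapn m i (x+a) + Fapn m i x = b
  · obtain ⟨x₀, hx₀⟩ := hex
    set a' := a + τ m (tr m b) with ha'def
    have h1 := sol_to_gold m j hm hme hjm a b x₀ ((hcond x₀).mp hx₀)
    by_cases ha' : a' = 0
    · exfalso
      rw [← ha'def, ha'] at h1
      rw [zero_pow (by positivity : (2:ℕ)^j ≠ 0)] at h1
      simp only [zero_mul, mul_zero, add_zero, zero_add] at h1
      apply ha
      calc a = a' := by rw [ha'def, ← h1, tr_zero, tau_zero, add_zero]
        _ = 0 := ha'
    · set z₀ := FF m j (FF m j x₀ + a') with hz₀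
      have hmem : ∀ y, (Fapn m i (y+a) + Fapn m i y = b) → y = x₀ ∨ y = z₀ := by
        intro y hy
        have h2 := sol_to_gold m j hm hme hjm a b y ((hcond y).mp hy)
        rw [← ha'def] at h1 h2
        rcases gold_unique m j (by omega) hg ha' h1 h2 with hc | hc
        · left
          have := congrArg (FF m j) hc
          rwa [FF_invol m j hm hme hjm, FF_invol m j hm hme hjm] at this
        · right
          have := congrArg (FF m j) hc
          rwa [FF_invol m j hm hme hjm, ← hz₀] at this
      have hinj : Function.Injective
          (fun x : {x : GaloisField 2 m // Fapn m i (x+a) + Fapn m i x = b} =>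
            if (x : GaloisField 2 m) = x₀ then (0 : Fin 2) else 1) := by
        rintro ⟨y, hy⟩ ⟨z, hz⟩ hfz
        simp only at hfz
        by_cases hy0 : y = x₀
        · by_cases hz0 : z = x₀
          · exact Subtype.ext (hy0.trans hz0.symm)
          · rw [if_pos hy0, if_neg hz0] at hfz
            exact absurd hfz (by decide)
        · by_cases hz0 : z = x₀
          · rw [if_neg hy0, if_pos hz0] at hfz
            exact absurd hfz (by decide)
          · apply Subtype.ext
            rcases hmem y hy with h | h
            · exact absurd h hy0
            rcases hmem z hz with h' | h'
            · exact absurd h' hz0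
            show y = z
            rw [h, h']
      calc Nat.card {x : GaloisField 2 m // Fapn m i (x+a) + Fapn m i x = b}
          ≤ Nat.card (Fin 2) := Nat.card_le_card_of_injective _ hinj
        _ = 2 := by simp
  · have : IsEmpty {x : GaloisField 2 m // Fapn m i (x+a) + Fapn m i x = b} :=
      ⟨fun x => hex ⟨x.1, x.2⟩⟩
    rw [Nat.card_of_isEmpty]; omega


lemma exists_omega (hm : m ≠ 0) (hme : Even m) :
    ∃ ω : GaloisField 2 m, ω^2 + ω + 1 = 0 := by
  classical
  cases nonempty_fintype (GaloisField 2 m)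
  have hcardK : Fintype.card (GaloisField 2 m) = 2^m := by
    rw [← Nat.card_eq_fintype_card, GaloisField.card 2 m hm]
  have hcard : Fintype.card (GaloisField 2 m)ˣ = 2^m - 1 := by
    rw [Fintype.card_units, hcardK]
  obtain ⟨n, hn⟩ := hme
  have h4 : ∀ k : ℕ, (3:ℕ) ∣ 4^k - 1 := by
    intro k; induction k with
    | zero => simp
    | succ t ih =>
        obtain ⟨c, hc⟩ := ih
        have h1 : 1 ≤ (4:ℕ)^t := Nat.one_le_pow t 4 (by norm_num)
        have h2 : (4:ℕ)^(t+1) = 4 * 4^t := by ring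
        exact ⟨4*c+1, by omega⟩
  have h3 : (3:ℕ) ∣ Fintype.card (GaloisField 2 m)ˣ := by
    have he : (2:ℕ)^m = 4^n := by
      rw [hn, pow_add, show (4:ℕ) = 2*2 from rfl, mul_pow]
    rw [hcard, he]
    exact h4 n
  haveI : Fact (Nat.Prime 3) := ⟨by norm_num⟩
  obtain ⟨g, hg⟩ := exists_prime_orderOf_dvd_card 3 h3
  have hg3 : (g : GaloisField 2 m)^3 = 1 := by
    have h5 := pow_orderOf_eq_one g
    rw [hg] at h5
    calc (g : GaloisField 2 m)^3 = ((g^3 : (GaloisField 2 m)ˣ) : GaloisField 2 m) := by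
          rw [Units.val_pow_eq_pow_val]
      _ = 1 := by rw [h5, Units.val_one]
  have hgne : (g : GaloisField 2 m) ≠ 1 := by
    intro h
    have h6 : g = 1 := Units.ext (by rw [h, Units.val_one])
    rw [h6, orderOf_one] at hg
    omega
  refine ⟨g, ?_⟩
  have hfac : ((g : GaloisField 2 m) - 1) * ((g : GaloisField 2 m)^2 + g + 1) = 0 := by
    linear_combination hg3
  rcases mul_eq_zero.mp hfac with h | h
  · exact absurd (sub_eq_zero.mp h) hgne
  · exact h

lemma exists_u (hm4 : 4 ≤ m) : ∃ u : GaloisField 2 m, u^4 ≠ u := by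
  classical
  by_contra hcon
  push_neg at hcon
  cases nonempty_fintype (GaloisField 2 m)
  set p : Polynomial (GaloisField 2 m) := Polynomial.X^4 - Polynomial.X with hp
  have hdeg : p.natDegree = 4 := by
    rw [hp, Polynomial.natDegree_sub_eq_left_of_natDegree_lt] <;>
      simp [Polynomial.natDegree_X_pow, Polynomial.natDegree_X]
  have hpne : p ≠ 0 := Polynomial.ne_zero_of_natDegree_gt (n := 0) (by omega)
  have hsub : ∀ x : GaloisField 2 m, x ∈ p.roots := by
    intro x
    rw [Polynomial.mem_roots hpne]
    show p.eval x = 0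
    rw [hp]
    simp [hcon x]
  have hcard4 : Fintype.card (GaloisField 2 m) ≤ 4 := by
    have h1 : (Finset.univ : Finset (GaloisField 2 m)).card ≤ p.roots.toFinset.card :=
      Finset.card_le_card (fun x _ => Multiset.mem_toFinset.mpr (hsub x))
    have h2 : p.roots.toFinset.card ≤ Multiset.card p.roots := p.roots.toFinset_card_le
    have h3 : Multiset.card p.roots ≤ p.natDegree := p.card_roots'
    rw [Finset.card_univ] at h1
    omega
  have hbig : (16:ℕ) ≤ Fintype.card (GaloisField 2 m) := by
    have : Fintype.card (GaloisField 2 m) = 2^m := by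
      rw [← Nat.card_eq_fintype_card, GaloisField.card 2 m (by omega)]
    rw [this]
    calc (16:ℕ) = 2^4 := by norm_num
      _ ≤ 2^m := Nat.pow_le_pow_right (by norm_num) hm4
  omega

lemma FapnJ_zero : FapnJ m j 0 = 0 := by
  have h0 : tt m j 0 = 0 := by rw [tt, mul_zero, tr_zero]
  rw [FapnJ, h0, tau_zero, mul_zero, mul_zero, add_zero]

lemma gold_cube (a u v : GaloisField 2 m) :
    a^(2^j)*a + u^(2^j)*u + v^(2^j)*v + (a+u)^(2^j)*(a+u) + (a+v)^(2^j)*(a+v)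
      + (u+v)^(2^j)*(u+v) + (a+u+v)^(2^j)*(a+u+v) = 0 := by
  simp only [frob_add]
  linear_combination (2*(a^(2^j)*a + u^(2^j)*u + v^(2^j)*v)
    + (a^(2^j)*u + u^(2^j)*a + a^(2^j)*v + v^(2^j)*a + u^(2^j)*v + v^(2^j)*u)) * h2c m

lemma diff_one (hm : m ≠ 0) (hme : Even m) (hjm : j ≤ m) (x : GaloisField 2 m) :
    FapnJ m j (x+1) + FapnJ m j x = x^(2^j) + x + 1 := by
  rw [FapnJ, FapnJ, tt_add_one m j hm hme hjm]
  have h1 : ll m j (x+1) = ll m j x + 2 := by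
    rw [ll, ll, frob_add, one_pow]; ring
  rw [h1, frob_add, one_pow]
  linear_combination (x^(2^j)*x + ll m j x * τ m (tt m j x) + τ m (tt m j x)) * h2c m

lemma fourpt (f : GaloisField 2 m → GaloisField 2 m)
    (h : ∀ s t, f s + f t + f (s+t) + f 0 = 0) (p q r : GaloisField 2 m) :
    f p + f q + f r + f (p+q+r) = 0 := by
  have h1 := h p q
  have h2 := h (p+q) r
  linear_combination h1 + h2 - (f (p+q) + f 0) * h2c m

lemma omega_pow (ω : GaloisField 2 m) (hω : ω^2 + ω + 1 = 0) (k : ℕ) (hk : k % 2 = 1) :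
    ω^(2^k) = ω^2 := by
  have aux : ∀ n : ℕ, ω^(2^(2*n+1)) = ω^2 := by
    intro n
    induction n with
    | zero => norm_num
    | succ t ih =>
        have h1 : 2*(t+1)+1 = (2*t+1) + 2 := by ring
        rw [h1, kpow_add, ih]
        show (ω^2)^(2^2) = ω^2
        linear_combination (ω^6 - ω^5 + ω^3 - ω^2) * hω
  have hk2 : k = 2*(k/2)+1 := by omega
  rw [hk2]
  exact aux (k/2)

lemma omega_cube (ω : GaloisField 2 m) (hω : ω^2 + ω + 1 = 0) : ω^2 * ω = 1 := by
  linear_combination (ω - 1) * hω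

lemma tt_omega (hm : m ≠ 0) (hme : Even m) (hjo : j % 2 = 1)
    (ω : GaloisField 2 m) (hω : ω^2 + ω + 1 = 0) : tt m j ω = 0 := by
  rw [tt, omega_pow m ω hω j hjo, omega_cube m ω hω, tr_one m hm hme]

lemma tt_omega_add (hm : m ≠ 0) (hme : Even m) (hjm : j ≤ m) (hjo : j % 2 = 1)
    (hmjo : (m - j) % 2 = 1) (ω : GaloisField 2 m) (hω : ω^2 + ω + 1 = 0)
    (x : GaloisField 2 m) : tt m j (ω + x) = tt m j x := by
  rw [tt_add m j hm hjm ω x, tt_omega m j hm hme hjo ω hω,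
    omega_pow m ω hω j hjo, omega_pow m ω hω (m-j) hmjo,
    CharTwo.add_self_eq_zero (ω^2), zero_mul, tr_zero, add_zero, zero_add]

lemma ll_omega (hjo : j % 2 = 1) (ω : GaloisField 2 m) (hω : ω^2 + ω + 1 = 0) :
    ll m j ω = 0 := by
  rw [ll, omega_pow m ω hω j hjo]; linear_combination hω

lemma ll_omega_add (hjo : j % 2 = 1) (ω : GaloisField 2 m) (hω : ω^2 + ω + 1 = 0)
    (x : GaloisField 2 m) : ll m j (ω + x) = ll m j x + 1 := by
  rw [ll, ll, frob_add, omega_pow m ω hω j hjo]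
  linear_combination hω - h2c m

lemma ll_add (x y : GaloisField 2 m) : ll m j (x+y) = ll m j x + ll m j y + 1 := by
  rw [ll, ll, ll, frob_add]; linear_combination -(h2c m)

theorem part2 (hm4 : 4 ≤ m) (hme : Even m) (i : ℕ) (hi : Nat.gcd i m = 1) :
    ¬ ∃ (d : ℕ) (A₁ A₂ : GaloisField 2 m ≃ₗ[ZMod 2] GaloisField 2 m)
        (A : GaloisField 2 m →ₗ[ZMod 2] GaloisField 2 m)
        (c₁ c₂ c₀ : GaloisField 2 m),
        ∀ x, Fapn m i x = A₁ ((A₂ x + c₂) ^ d) + c₁ + A x + c₀ := by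
  rintro ⟨d, A₁, A₂, A, c₁, c₂, c₀, hEq⟩
  have hm : m ≠ 0 := by omega
  set j := i % m with hjdef
  have hjlt : j < m := Nat.mod_lt _ (by omega)
  have hjm : j ≤ m := le_of_lt hjlt
  have hg : Nat.gcd j m = 1 := by
    rw [hjdef, ← Nat.gcd_rec, Nat.gcd_comm]; exact hi
  have hmo : m % 2 = 0 := Nat.even_iff.mp hme
  have hjo : j % 2 = 1 := by
    rcases Nat.even_or_odd j with h | h
    · exfalso
      have h1 : 2 ∣ Nat.gcd j m := Nat.dvd_gcd h.two_dvd hme.two_dvd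
      rw [hg] at h1
      omega
    · exact Nat.odd_iff.mp h
  have hmjo : (m - j) % 2 = 1 := by omega
  have hEq' : ∀ x, FapnJ m j x = A₁ ((A₂ x + c₂)^d) + c₁ + A x + c₀ := by
    intro x
    rw [← Fapn_eq m j hm i hjdef]
    exact hEq x
  -- step 1 : the R function and its 4-point property
  set Rf : GaloisField 2 m → GaloisField 2 m :=
    fun s => A₁ ((s + A₂ 1 + c₂)^d + (s + c₂)^d) with hRf
  have hEq'' : ∀ y, A₁ ((A₂ y + c₂)^d) = FapnJ m j y + c₁ + A y + c₀ := by
    intro y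
    linear_combination -(hEq' y) - (c₁ + A y + c₀) * h2c m
  have hRx : ∀ x, Rf (A₂ x) = x^(2^j) + x + 1 + A 1 := by
    intro x
    have h4 : A₂ x + A₂ 1 + c₂ = A₂ (x+1) + c₂ := by rw [map_add]
    have e3 := diff_one m j hm hme hjm x
    calc Rf (A₂ x) = A₁ ((A₂ (x+1) + c₂)^d) + A₁ ((A₂ x + c₂)^d) := by
          simp only [hRf]; rw [h4, map_add]
      _ = (FapnJ m j (x+1) + c₁ + A (x+1) + c₀) + (FapnJ m j x + c₁ + A x + c₀) := by
          rw [hEq'' (x+1), hEq'' x]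
      _ = x^(2^j) + x + 1 + A 1 := by
          rw [map_add]
          linear_combination e3 + (c₁ + c₀ + A x) * h2c m
  have hR0 : ∀ s t, Rf s + Rf t + Rf (s+t) + Rf 0 = 0 := by
    intro s t
    obtain ⟨x, rfl⟩ : ∃ x, A₂ x = s := ⟨A₂.symm s, A₂.apply_symm_apply s⟩
    obtain ⟨y, rfl⟩ : ∃ y, A₂ y = t := ⟨A₂.symm t, A₂.apply_symm_apply t⟩
    have hx3 : Rf (A₂ x + A₂ y) = (x+y)^(2^j) + (x+y) + 1 + A 1 := by
      rw [← map_add]; exact hRx (x+y)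
    have h00 : Rf 0 = (0:GaloisField 2 m)^(2^j) + 0 + 1 + A 1 := by
      conv_lhs => rw [show (0:GaloisField 2 m) = A₂ 0 from (map_zero A₂).symm]
      exact hRx 0
    rw [hRx, hRx, hx3, h00, frob_add, zero_pow (by positivity : (2:ℕ)^j ≠ 0)]
    linear_combination (x^(2^j) + y^(2^j) + x + y + 2 + 2 * A 1) * h2c m
  have hRgen : ∀ p q r, Rf p + Rf q + Rf r + Rf (p+q+r) = 0 := fourpt m Rf hR0
  -- step 2 : 4-point property for the derivative of the power function at A₂ 1
  have hαne : A₂ (1 : GaloisField 2 m) ≠ 0 := by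
    intro h
    exact one_ne_zero (A₂.injective (h.trans (map_zero A₂).symm))
  set Qf : GaloisField 2 m → GaloisField 2 m :=
    fun w => (w + A₂ 1)^d + w^d with hQf
  have hA : ∀ w, A₁ (Qf w) = Rf (w + c₂) := by
    intro w
    simp only [hQf, hRf]
    rw [show w + c₂ + A₂ 1 + c₂ = w + A₂ 1 by linear_combination c₂ * h2c m,
      show w + c₂ + c₂ = w by linear_combination c₂ * h2c m]
  have hQ0 : ∀ u v, Qf u + Qf v + Qf (u+v) + Qf 0 = 0 := by
    intro u v
    apply A₁.injective
    rw [map_add, map_add, map_add, map_zero, hA, hA, hA, hA]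
    have hgen := hRgen (u+c₂) (v+c₂) c₂
    rw [show u+c₂+(v+c₂)+c₂ = u+v+c₂ by linear_combination c₂ * h2c m] at hgen
    rw [show (0 : GaloisField 2 m) + c₂ = c₂ from zero_add c₂]
    linear_combination hgen
  -- step 3 : scaling to any nonzero direction γ
  have hQγ : ∀ γ : GaloisField 2 m, γ ≠ 0 → ∀ u v : GaloisField 2 m,
      ((u+γ)^d + u^d) + ((v+γ)^d + v^d) + (((u+v)+γ)^d + (u+v)^d)
        + ((0+γ)^d + (0:GaloisField 2 m)^d) = 0 := by
    intro γ hγ u v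
    set lam := γ * (A₂ 1)⁻¹ with hlam
    have hlne : lam ≠ 0 := mul_ne_zero hγ (inv_ne_zero hαne)
    have hkey : ∀ w : GaloisField 2 m, (w + γ)^d + w^d = lam^d * (Qf (lam⁻¹ * w)) := by
      intro w
      have h1 : lam * (lam⁻¹ * w + A₂ 1) = w + γ := by
        rw [mul_add, ← mul_assoc, mul_inv_cancel₀ hlne, one_mul, hlam,
          mul_assoc, inv_mul_cancel₀ hαne, mul_one]
      have h2 : lam * (lam⁻¹ * w) = w := by
        rw [← mul_assoc, mul_inv_cancel₀ hlne, one_mul]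
      simp only [hQf]
      rw [mul_add, ← mul_pow, ← mul_pow, h1, h2]
    rw [hkey u, hkey v, hkey (u+v), hkey 0]
    rw [show lam⁻¹ * (u+v) = lam⁻¹*u + lam⁻¹*v from mul_add _ _ _,
      show lam⁻¹ * (0:GaloisField 2 m) = 0 from mul_zero _]
    linear_combination lam^d * hQ0 (lam⁻¹*u) (lam⁻¹*v)
  -- step 4 : all third-order sums of FapnJ vanish
  have hcube : ∀ a u v : GaloisField 2 m, v ≠ 0 →
      FapnJ m j 0 + FapnJ m j a + FapnJ m j u + FapnJ m j v + FapnJ m j (a+u)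
        + FapnJ m j (a+v) + FapnJ m j (u+v) + FapnJ m j (a+u+v) = 0 := by
    intro a u v hv
    have hγ : A₂ v ≠ 0 := by
      intro h
      exact hv (A₂.injective (h.trans (map_zero A₂).symm))
    have hgen := fourpt m (fun w => (w + A₂ v)^d + w^d) (hQγ (A₂ v) hγ)
      (A₂ a + c₂) (A₂ u + c₂) c₂
    rw [show A₂ a + c₂ + (A₂ u + c₂) + c₂ = A₂ a + A₂ u + c₂ by
        linear_combination c₂ * h2c m] at hgen
    have hA1 := congrArg A₁ hgen
    rw [map_zero] at hA1
    simp only [map_add] at hA1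
    rw [show A₂ a + c₂ + A₂ v = A₂ a + A₂ v + c₂ by ring,
      show A₂ u + c₂ + A₂ v = A₂ u + A₂ v + c₂ by ring,
      show c₂ + A₂ v = A₂ v + c₂ by ring,
      show A₂ a + A₂ u + c₂ + A₂ v = A₂ a + A₂ u + A₂ v + c₂ by ring] at hA1
    rw [hEq' 0, hEq' a, hEq' u, hEq' v, hEq' (a+u), hEq' (a+v), hEq' (u+v), hEq' (a+u+v)]
    simp only [map_add, map_zero, zero_add, add_zero]
    linear_combination hA1 + (4*(c₁+c₀) + 2*(A a + A u + A v)) * h2c m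
  -- step 5 : witnesses
  obtain ⟨ω, hω⟩ := exists_omega m hm hme
  obtain ⟨u, hu4⟩ := exists_u m hm4
  have hφ : u^(2^j) + u^(2^(m-j)) ≠ 0 := by
    intro h
    apply hu4
    have h1 : u^(2^j) = u^(2^(m-j)) := by
      linear_combination h - u^(2^(m-j)) * h2c m
    have h2 : u^(2^(2*j)) = u := by
      calc u^(2^(2*j)) = (u^(2^j))^(2^j) := by rw [show 2*j = j+j by ring, kpow_add]
        _ = (u^(2^(m-j)))^(2^j) := by rw [h1]
        _ = u^(2^((m-j)+j)) := (kpow_add m u (m-j) j).symm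
        _ = u^(2^m) := by rw [Nat.sub_add_cancel hjm]
        _ = u := kpow_card m hm u
    exact four_of_frob2_fixed m hm4 hg u h2
  obtain ⟨v, hv⟩ := tr_exists_one m hm hφ
  have hvne : v ≠ 0 := by
    intro h
    rw [h, mul_zero, tr_zero] at hv
    exact (by decide : (0:ZMod 2) ≠ 1) hv
  -- step 6 : evaluate the cube sum at the witness
  have hC := hcube ω u v hvne
  have hFω' : FapnJ m j ω = ω^(2^j) * ω := by
    rw [FapnJ, ll_omega m j hjo ω hω, zero_mul, add_zero]
  have htuv : tt m j (u+v) = tt m j u + tt m j v + 1 := by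
    rw [tt_add m j hm hjm u v, hv]
  have hτuv : τ m (tt m j u + tt m j v + 1)
      = τ m (tt m j u) + τ m (tt m j v) + 1 := by
    rw [tau_add, tau_add, tau_one]
  rw [show ω + u + v = ω + (u+v) from add_assoc ω u v, FapnJ_zero m j, hFω'] at hC
  simp only [FapnJ] at hC
  rw [tt_omega_add m j hm hme hjm hjo hmjo ω hω u,
    tt_omega_add m j hm hme hjm hjo hmjo ω hω v,
    tt_omega_add m j hm hme hjm hjo hmjo ω hω (u+v),
    ll_omega_add m j hjo ω hω u, ll_omega_add m j hjo ω hω v,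
    ll_omega_add m j hjo ω hω (u+v), ll_add m j u v, htuv, hτuv] at hC
  have hgc := gold_cube m j ω u v
  rw [show ω + u + v = ω + (u+v) from add_assoc ω u v] at hgc
  have hone : (1 : GaloisField 2 m) = 0 := by
    linear_combination hC - hgc - (ll m j u * τ m (tt m j u) + ll m j v * τ m (tt m j v)
      + (ll m j u + ll m j v)*(τ m (tt m j u) + τ m (tt m j v) + 1)
      + 2*(τ m (tt m j u)) + 2*(τ m (tt m j v)) + 1) * h2c m
  exact one_ne_zero hone

end

/-- For `m ≥ 4` even and `gcd(i,m) = 1`, the function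
`F'(x) = x^{2^i+1} + (x^{2^i}+x+1)·tr(x^{2^i+1})` is APN (every equation
`F'(x+a) + F'(x) = b` with `a ≠ 0` has at most two solutions) and is
EA-inequivalent to every power function. -/
theorem stmt_17 (m i : ℕ) (hm : 4 ≤ m) (hme : Even m) (hi : Nat.gcd i m = 1) :
    (∀ a b : GaloisField 2 m, a ≠ 0 →
      Nat.card {x : GaloisField 2 m // Fapn m i (x + a) + Fapn m i x = b} ≤ 2) ∧
    ¬ ∃ (d : ℕ) (A₁ A₂ : GaloisField 2 m ≃ₗ[ZMod 2] GaloisField 2 m)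
        (A : GaloisField 2 m →ₗ[ZMod 2] GaloisField 2 m)
        (c₁ c₂ c₀ : GaloisField 2 m),
        ∀ x, Fapn m i x = A₁ ((A₂ x + c₂) ^ d) + c₁ + A x + c₀ := by
  exact ⟨fun a b ha => part1 m hm hme i hi a b ha, part2 m hm hme i hi⟩
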